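/- (Relation between the unnormalized risk-sensitive conditional state and the normalized conditional state.) Let Γ be a controlled transfer operator with p(y|u,ω) ≠ 0 for every u ∈ U, y ∈ Y and every normalized state ω. Let L be a cost function, μ > 0, and R(u)ω̂ = (tr(exp(μ L(u)) ω̂)/tr ω̂) · ω̂ (with R(u)0 = 0). Fix any controls u_0, u_1, … and outcomes y_1, y_2, …, let ω_0 be a normalized state, ω_{k+1} = Λ_Γ(u_k,y_{k+1}) ω_k, and let ω̂_0 = ω_0, ω̂_{k+1} = Λ_{Γ,R}(u_k,y_{k+1}) ω̂_k. Then for every k ≥ 0, ω̂_k = (∏_{i=0}^{k−1} tr(exp(μ L(u_i)) ω_i)) · ω_k. -/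

import Mathlib

open Matrix BigOperators
open scoped ComplexOrder

noncomputable section

/-- Complex `n × n` matrices. -/
abbrev Mat (n : ℕ) := Matrix (Fin n) (Fin n) ℂ

/-- Real part of the trace. -/
def trR {n : ℕ} (A : Mat n) : ℝ := A.trace.re

/-- The matrix exponential. -/
def expM {n : ℕ} (A : Mat n) : Mat n := NormedSpace.exp A

open scoped MatrixOrder in
lemma posSemidef_iff_eq_transpose_mul_self {n : ℕ} {A : Mat n} :
    A.PosSemidef ↔ ∃ B : Mat n, A = Bᴴ * B := by
  constructor
  · intro hA
    obtain ⟨B, hB⟩ := CStarAlgebra.nonneg_iff_eq_star_mul_self.mp hA.nonneg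
    exact ⟨B, hB⟩
  · rintro ⟨B, rfl⟩
    exact posSemidef_conjTranspose_mul_self B

lemma rsmul {n : ℕ} (r : ℝ) (A : Mat n) : r • A = (r : ℂ) • A :=
  (smul_one_smul ℂ r A).symm.trans (by norm_num)

lemma trR_smul {n : ℕ} (r : ℝ) (A : Mat n) : trR (r • A) = r * trR A := by
  unfold trR; rw [rsmul, trace_smul, smul_eq_mul]
  simp [Complex.mul_re]

lemma conjT_rsmul {n : ℕ} (r : ℝ) (A : Mat n) : (r • A)ᴴ = r • Aᴴ := by
  rw [rsmul, conjTranspose_smul]; rw [show star ((r:ℝ):ℂ) = ((r:ℝ):ℂ) from Complex.conj_ofReal r, ← rsmul]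

lemma herm_rsmul {n : ℕ} (r : ℝ) {A : Mat n} (h : A.IsHermitian) : (r • A).IsHermitian := by
  unfold Matrix.IsHermitian at *; rw [conjT_rsmul, h]

lemma psd_rsmul {n : ℕ} {A : Mat n} (hA : A.PosSemidef) {r : ℝ} (hr : 0 ≤ r) :
    (r • A).PosSemidef := by
  obtain ⟨B, rfl⟩ := posSemidef_iff_eq_transpose_mul_self.mp hA
  refine posSemidef_iff_eq_transpose_mul_self.mpr ⟨Real.sqrt r • B, ?_⟩
  rw [conjT_rsmul, smul_mul_assoc, mul_smul_comm, smul_smul, Real.mul_self_sqrt hr]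

lemma trR_ctms {n : ℕ} (B : Mat n) :
    trR (Bᴴ * B) = ∑ j, ∑ i, Complex.normSq (B i j) := by
  unfold trR
  rw [Matrix.trace, Complex.re_sum]
  refine Finset.sum_congr rfl fun j _ => ?_
  rw [Matrix.diag_apply, Matrix.mul_apply, Complex.re_sum]
  refine Finset.sum_congr rfl fun i _ => ?_
  rw [conjTranspose_apply]
  simp [Complex.normSq_apply, Complex.mul_re]

lemma trR_ctms_nonneg {n : ℕ} (B : Mat n) : 0 ≤ trR (Bᴴ * B) := by
  rw [trR_ctms]
  exact Finset.sum_nonneg fun j _ => Finset.sum_nonneg fun i _ => Complex.normSq_nonneg _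

lemma trR_ctms_pos {n : ℕ} {B : Mat n} (hB : B ≠ 0) : 0 < trR (Bᴴ * B) := by
  rcases (trR_ctms_nonneg B).lt_or_eq with h | h
  · exact h
  · exfalso; apply hB
    rw [trR_ctms] at h
    ext i j
    have h1 : ∀ j ∈ Finset.univ, (0:ℝ) ≤ ∑ i, Complex.normSq (B i j) :=
      fun j _ => Finset.sum_nonneg fun i _ => Complex.normSq_nonneg _
    have h2 := (Finset.sum_eq_zero_iff_of_nonneg h1).mp h.symm j (Finset.mem_univ j)
    have h3 := (Finset.sum_eq_zero_iff_of_nonneg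
      (fun i _ => Complex.normSq_nonneg (B i j))).mp h2 i (Finset.mem_univ i)
    simpa using Complex.normSq_eq_zero.mp h3

lemma trR_nonneg {n : ℕ} {A : Mat n} (hA : A.PosSemidef) : 0 ≤ trR A := by
  obtain ⟨B, rfl⟩ := posSemidef_iff_eq_transpose_mul_self.mp hA
  exact trR_ctms_nonneg B

lemma trace_real {n : ℕ} {A : Mat n} (hA : A.IsHermitian) : A.trace = (trR A : ℂ) := by
  have h : star A.trace = A.trace := by
    rw [← Matrix.trace_conjTranspose, hA.eq]
  exact (Complex.conj_eq_iff_re.mp h).symm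

lemma trR_exp_mul_pos {n : ℕ} {M A : Mat n} (hM : M.IsHermitian)
    (hA : A.PosSemidef) (hAtr : A.trace = 1) : 0 < trR (expM M * A) := by
  set S : Mat n := expM ((2⁻¹ : ℝ) • M) with hSdef
  have hhalf : ((2⁻¹ : ℝ) • M).IsHermitian := herm_rsmul _ hM
  have hermS : S.IsHermitian := hhalf.exp
  have hSS : S * S = expM M := by
    rw [hSdef]; unfold expM
    rw [← Matrix.exp_add_of_commute _ _ (Commute.refl _), ← add_smul]
    norm_num
  have hSinv : S * expM (-((2⁻¹ : ℝ) • M)) = 1 := by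
    rw [hSdef]; unfold expM
    rw [← Matrix.exp_add_of_commute _ _ ((Commute.refl ((2⁻¹ : ℝ) • M)).neg_right), add_neg_cancel]
    simp [NormedSpace.exp_zero]
  obtain ⟨B, rfl⟩ := posSemidef_iff_eq_transpose_mul_self.mp hA
  have hB : B ≠ 0 := by
    rintro rfl; simp at hAtr
  have hBS : B * S ≠ 0 := by
    intro h
    apply hB
    calc B = B * (S * expM (-((2⁻¹ : ℝ) • M))) := by rw [hSinv, mul_one]
    _ = (B * S) * expM (-((2⁻¹ : ℝ) • M)) := by rw [Matrix.mul_assoc]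
    _ = 0 := by rw [h, Matrix.zero_mul]
  have key : trR (expM M * (Bᴴ * B)) = trR ((B * S)ᴴ * (B * S)) := by
    unfold trR
    congr 1
    rw [conjTranspose_mul, hermS.eq, ← hSS]
    rw [show S * S * (Bᴴ * B) = S * (S * (Bᴴ * B)) from by rw [Matrix.mul_assoc]]
    rw [Matrix.trace_mul_comm]
    congr 1
    simp [Matrix.mul_assoc]
  rw [key]
  exact trR_ctms_pos hBS

/-- The probability `p(y|u,ω) = tr(Γ(u,y)ω)`. -/
def pDist {n : ℕ} {U Y : Type*} (Γ : U → Y → Mat n →ₗ[ℂ] Mat n)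
    (u : U) (y : Y) (ω : Mat n) : ℝ := trR (Γ u y ω)

/-- The normalized conditional state `Λ_Γ(u,y)ω = Γ(u,y)ω / p(y|u,ω)` (equal to `0`
when `p(y|u,ω) = 0`). -/
def lamState {n : ℕ} {U Y : Type*} (Γ : U → Y → Mat n →ₗ[ℂ] Mat n)
    (u : U) (y : Y) (ω : Mat n) : Mat n := (pDist Γ u y ω)⁻¹ • Γ u y ω

/-- The exponential operator valued cost
`R(u)ωh = (tr(exp(μ L(u)) ωh)/tr ωh) • ωh` (with `R(u)0 = 0`). -/
def Rexp {n : ℕ} {U : Type*} (μ : ℝ) (L : U → Mat n) (u : U) (ωh : Mat n) : Mat n :=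
  (trR (expM (μ • L u) * ωh) / trR ωh) • ωh

/-- `p_R(y|u,ωh) = tr(Γ(u,y)(R(u)ωh)) / tr(R(u)ωh)` (0 if the denominator is 0). -/
def pR {n : ℕ} {U Y : Type*} (Γ : U → Y → Mat n →ₗ[ℂ] Mat n)
    (R : U → Mat n → Mat n) (u : U) (y : Y) (ωh : Mat n) : ℝ :=
  trR (Γ u y (R u ωh)) / trR (R u ωh)

/-- The unnormalized conditional state `Λ_{Γ,R}(u,y)ωh` (0 when `p_R(y|u,ωh) = 0`). -/
def lamR {n : ℕ} {U Y : Type*} (Γ : U → Y → Mat n →ₗ[ℂ] Mat n)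
    (R : U → Mat n → Mat n) (u : U) (y : Y) (ωh : Mat n) : Mat n :=
  (pR Γ R u y ωh)⁻¹ • Γ u y (R u ωh)

set_option maxHeartbeats 1600000

/-- the unnormalized risk-sensitive conditional state is the normalized
conditional state scaled by `∏_{i<k} tr(exp(μ L(u_i)) ω_i)`. -/
theorem unnormalized_state_eq_scaled_state
    {n : ℕ} {U Y : Type*} [Fintype U] [Nonempty U] [Fintype Y] [Nonempty Y]
    (Γ : U → Y → Mat n →ₗ[ℂ] Mat n)
    (hPSD : ∀ (u : U) (y : Y) (ω : Mat n), ω.PosSemidef → (Γ u y ω).PosSemidef)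
    (hNorm : ∀ (u : U) (ω : Mat n), ∑ y : Y, (Γ u y ω).trace = ω.trace)
    (hp : ∀ (u : U) (y : Y) (ω : Mat n), ω.PosSemidef → ω.trace = 1 →
      pDist Γ u y ω ≠ 0)
    (L : U → Mat n) (hL : ∀ u, (L u).PosSemidef)
    (μ : ℝ) (hμ : 0 < μ)
    (u : ℕ → U) (ys : ℕ → Y)
    (ω : ℕ → Mat n) (ωh : ℕ → Mat n)
    (hω0 : (ω 0).PosSemidef) (hω0tr : (ω 0).trace = 1)
    (hω : ∀ k : ℕ, ω (k + 1) = lamState Γ (u k) (ys (k + 1)) (ω k))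
    (hωh0 : ωh 0 = ω 0)
    (hωh : ∀ k : ℕ, ωh (k + 1) = lamR Γ (Rexp μ L) (u k) (ys (k + 1)) (ωh k)) :
    ∀ k : ℕ,
      ωh k = (∏ i ∈ Finset.range k, trR (expM (μ • L (u i)) * ω i)) • ω k := by
  have hInv : ∀ k, (ω k).PosSemidef ∧ (ω k).trace = 1 := by
    intro k
    induction k with
    | zero => exact ⟨hω0, hω0tr⟩
    | succ k ih =>
      obtain ⟨hpsd, htr⟩ := ih
      have hΓ : (Γ (u k) (ys (k+1)) (ω k)).PosSemidef := hPSD _ _ _ hpsd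
      have hpne := hp (u k) (ys (k+1)) (ω k) hpsd htr
      have hppos : 0 < pDist Γ (u k) (ys (k+1)) (ω k) :=
        (trR_nonneg hΓ).lt_of_ne (Ne.symm hpne)
      constructor
      · rw [hω k]; unfold lamState
        exact psd_rsmul hΓ (inv_nonneg.mpr hppos.le)
      · rw [hω k]; unfold lamState
        rw [trace_smul, trace_real hΓ.isHermitian]
        simp only [pDist] at hpne ⊢
        rw [Complex.real_smul, ← Complex.ofReal_mul, inv_mul_cancel₀ hpne]
        norm_num
  have ht : ∀ i, 0 < trR (expM (μ • L (u i)) * ω i) := fun i =>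
    trR_exp_mul_pos (herm_rsmul μ (hL (u i)).isHermitian) (hInv i).1 (hInv i).2
  intro k
  induction k with
  | zero => simpa using hωh0
  | succ k ih =>
    obtain ⟨hpsd, htr⟩ := hInv k
    set c := ∏ i ∈ Finset.range k, trR (expM (μ • L (u i)) * ω i) with hc
    have hcpos : 0 < c := Finset.prod_pos fun i _ => ht i
    set t := trR (expM (μ • L (u k)) * ω k) with htdef
    have htpos : 0 < t := ht k
    set p := pDist Γ (u k) (ys (k+1)) (ω k) with hpdef
    have hΓ : (Γ (u k) (ys (k+1)) (ω k)).PosSemidef := hPSD _ _ _ hpsd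
    have hpne : p ≠ 0 := hp _ _ _ hpsd htr
    have htrR : trR (ω k) = 1 := by unfold trR; rw [htr]; simp
    have hR : Rexp μ L (u k) (ωh k) = (t * c) • ω k := by
      rw [ih]
      unfold Rexp
      rw [mul_smul_comm, trR_smul, trR_smul, htrR, mul_one, ← htdef,
        mul_comm c t, mul_div_assoc, div_self hcpos.ne', mul_one, smul_smul]
    have hΓR : Γ (u k) (ys (k+1)) (Rexp μ L (u k) (ωh k))
        = (t * c) • Γ (u k) (ys (k+1)) (ω k) := by
      rw [hR, LinearMap.map_smul_of_tower]
    have hpR : pR Γ (Rexp μ L) (u k) (ys (k+1)) (ωh k) = p := by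
      unfold pR
      rw [hΓR, hR, trR_smul, trR_smul, htrR, mul_one, hpdef]
      simp only [pDist]
      exact mul_div_cancel_left₀ _ (mul_ne_zero htpos.ne' hcpos.ne')
    rw [hωh k]
    unfold lamR
    rw [hpR, hΓR, hω k]
    unfold lamState
    rw [Finset.prod_range_succ, ← hc, ← htdef, ← hpdef,
      smul_smul, smul_smul]
    congr 1
    ring
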